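/- For each j = 1,…,J with L_j ≥ 2 let c_j = (√L_j − 1)/(L_j − 1) and let A_j : ℝ^{L_j} → ℝ^{L_j − 1} be the linear map (A_j d)_i = d_{i+1} − c_j·d_1. Let A : ℝ^{|L|} → ℝ^{|L|−J} be the block-diagonal map acting as A_j on the j-th block of coordinates. Then: (a) for all x, y ∈ ℝ^{|L|} satisfying Σ_{l=1}^{L_j} x_{jl} = Σ_{l=1}^{L_j} y_{jl} for every j, one has ‖Ax − Ay‖ = ‖x − y‖; and (b) the image under A of the affine subspace S = {x ∈ ℝ^{|L|} : Σ_{l=1}^{L_j} x_{jl} = 1 for every j} is all of ℝ^{|L|−J}. Hence A restricted to S is an isometry of S onto ℝ^{|L|−J}. -/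

import Mathlib

open Finset

lemma sum_fin_split (n : ℕ) (hn : 1 ≤ n) (f : Fin n → ℝ) :
    ∑ l, f l = f ⟨0, by omega⟩ + ∑ i : Fin (n - 1), f ⟨i.1 + 1, by have := i.isLt; omega⟩ := by
  obtain ⟨m, rfl⟩ : ∃ m, n = m + 1 := ⟨n - 1, by omega⟩
  rw [Fin.sum_univ_succ]
  congr 1

lemma block (n : ℕ) (hn : 2 ≤ n) (c : ℝ) (hc : c = (Real.sqrt n - 1) / ((n : ℝ) - 1))
    (d : Fin n → ℝ) (hd : ∑ l, d l = 0) :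
    ∑ i : Fin (n - 1), (d ⟨i.1 + 1, by have := i.isLt; omega⟩ - c * d ⟨0, by omega⟩) ^ 2
      = ∑ l, d l ^ 2 := by
  have h0 : (0:ℕ) < n := by omega
  set d0 := d ⟨0, h0⟩ with hd0
  rw [sum_fin_split n (by omega) d] at hd
  rw [sum_fin_split n (by omega) (fun l => d l ^ 2)]
  set S := ∑ i : Fin (n - 1), d ⟨i.1 + 1, by have := i.isLt; omega⟩ with hS
  have hSd : S = -d0 := by linarith
  have hexp : ∀ i : Fin (n-1), (d ⟨i.1 + 1, by have := i.isLt; omega⟩ - c * d ⟨0, h0⟩) ^ 2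
      = d ⟨i.1 + 1, by have := i.isLt; omega⟩ ^ 2
        - (2 * c * d0) * d ⟨i.1 + 1, by have := i.isLt; omega⟩ + (c * d0) ^ 2 := by
    intro i; rw [hd0]; ring
  rw [Finset.sum_congr rfl fun i _ => hexp i]
  rw [Finset.sum_add_distrib, Finset.sum_sub_distrib, ← Finset.mul_sum, ← hS,
    Finset.sum_const, Finset.card_univ, Fintype.card_fin, nsmul_eq_mul]
  have hkey : 2 * c + ((n:ℝ) - 1) * c ^ 2 = 1 := by
    have hs : Real.sqrt n ^ 2 = n := Real.sq_sqrt (by positivity)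
    have hn1 : ((n:ℝ) - 1) ≠ 0 := by
      have : (2:ℝ) ≤ n := by exact_mod_cast hn
      linarith
    rw [hc]; field_simp; nlinarith [hs]
  have hcast : ((n - 1 : ℕ) : ℝ) = (n:ℝ) - 1 := by
    have : (1:ℕ) ≤ n := by omega
    push_cast [this]; ring
  rw [hcast, hSd]
  nlinarith [hkey]

/-- the block-diagonal map `A : ℝ^{|L|} → ℝ^{|L|−J}` whose `j`-th
block is `(A_j d)_i = d_{i+1} − c_j·d_1` with `c_j = (√L_j − 1)/(L_j − 1)`:
(a) preserves Euclidean distances between vectors having equal block sums, and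
(b) maps the affine subspace `S = {x : ∑_l x_{jl} = 1 for all j}` onto all of
`ℝ^{|L|−J}`.  Hence `A` restricted to `S` is an isometry of `S` onto
`ℝ^{|L|−J}`. -/
theorem stmt_9
    (J : ℕ) (hJ : 1 ≤ J) (L : Fin J → ℕ) (hL : ∀ j, 2 ≤ L j)
    (c : Fin J → ℝ) (hc : ∀ j, c j = (Real.sqrt (L j) - 1) / ((L j : ℝ) - 1))
    (A : EuclideanSpace ℝ ((j : Fin J) × Fin (L j)) →
         EuclideanSpace ℝ ((j : Fin J) × Fin (L j - 1)))
    (hA : ∀ (x : EuclideanSpace ℝ ((j : Fin J) × Fin (L j)))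
        (j : Fin J) (i : Fin (L j - 1)),
      A x ⟨j, i⟩ = x ⟨j, ⟨i.1 + 1, by have := i.isLt; omega⟩⟩
        - c j * x ⟨j, ⟨0, by have := hL j; omega⟩⟩) :
    (∀ x y : EuclideanSpace ℝ ((j : Fin J) × Fin (L j)),
      (∀ j, ∑ l, x ⟨j, l⟩ = ∑ l, y ⟨j, l⟩) → ‖A x - A y‖ = ‖x - y‖) ∧
    A '' {x : EuclideanSpace ℝ ((j : Fin J) × Fin (L j)) |
        ∀ j, ∑ l, x ⟨j, l⟩ = 1} = Set.univ := by
  constructor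
  · intro x y h
    rw [EuclideanSpace.norm_eq, EuclideanSpace.norm_eq]
    congr 1
    rw [← Finset.univ_sigma_univ, Finset.sum_sigma, ← Finset.univ_sigma_univ, Finset.sum_sigma]
    refine Finset.sum_congr rfl fun j _ => ?_
    have hd : ∑ l, (x ⟨j, l⟩ - y ⟨j, l⟩) = 0 := by
      rw [Finset.sum_sub_distrib, h j]; ring
    have hb := block (L j) (hL j) (c j) (hc j) (fun l => x ⟨j, l⟩ - y ⟨j, l⟩) hd
    simp only [Real.norm_eq_abs, sq_abs]
    rw [show (∑ l, ((x - y) ⟨j, l⟩) ^ 2) = ∑ l, (x ⟨j, l⟩ - y ⟨j, l⟩) ^ 2 from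
      Finset.sum_congr rfl fun l _ => by simp [PiLp.sub_apply], ← hb]
    refine Finset.sum_congr rfl fun i _ => ?_
    simp only [PiLp.sub_apply, hA]
    ring
  · rw [Set.eq_univ_iff_forall]
    intro z
    set t : Fin J → ℝ := fun j => (1 - ∑ i : Fin (L j - 1), z ⟨j, i⟩) / Real.sqrt (L j) with ht
    set xv : EuclideanSpace ℝ ((j : Fin J) × Fin (L j)) := WithLp.toLp 2 (fun p : ((j : Fin J) × Fin (L j)) =>
      if h : p.2.1 = 0 then t p.1
      else z ⟨p.1, ⟨p.2.1 - 1, by have := p.2.isLt; omega⟩⟩ + c p.1 * t p.1) with hxv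
    have hx0 : ∀ j, xv ⟨j, ⟨0, by have := hL j; omega⟩⟩ = t j := by
      intro j; simp [hxv]
    have hxs : ∀ j (i : Fin (L j - 1)),
        xv ⟨j, ⟨i.1 + 1, by have := i.isLt; omega⟩⟩ = z ⟨j, i⟩ + c j * t j := by
      intro j i; simp [hxv]
    refine ⟨xv, ?_, ?_⟩
    · intro j
      rw [sum_fin_split (L j) (by have := hL j; omega) (fun l => xv ⟨j, l⟩)]
      simp only [hx0, hxs]
      rw [Finset.sum_add_distrib, Finset.sum_const, Finset.card_univ, Fintype.card_fin,
        nsmul_eq_mul]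
      have h2 : (2:ℝ) ≤ (L j : ℝ) := by exact_mod_cast hL j
      have hs : Real.sqrt (L j) ^ 2 = (L j : ℝ) := Real.sq_sqrt (by positivity)
      have hspos : 0 < Real.sqrt (L j) := Real.sqrt_pos.mpr (by linarith)
      have hcard : ((L j - 1 : ℕ) : ℝ) = (L j : ℝ) - 1 := by
        have : (1:ℕ) ≤ L j := by have := hL j; omega
        push_cast [this]; ring
      have hne : (L j : ℝ) - 1 ≠ 0 := by linarith
      have hcmul : ((L j : ℝ) - 1) * c j = Real.sqrt (L j) - 1 := by
        rw [hc j]; field_simp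
      have htj : t j * Real.sqrt (L j) = 1 - ∑ i : Fin (L j - 1), z ⟨j, i⟩ := by
        rw [ht]; field_simp
      rw [hcard]
      linear_combination t j * hcmul + htj
    · ext p
      obtain ⟨j, i⟩ := p
      rw [hA, hxs, hx0]
      ring
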